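/- Let x, y, z : [0,∞) → ℝ be continuous with x(0) = y(0) = z(0) = 0. Define the binary operations (f △ g)(t) = inf_{0≤s≤t} [ f(s) − g(s) + g(t) ] and (f ▽ g)(t) = sup_{0≤s≤t} [ f(s) − g(s) + g(t) ] on such functions. Then ( x △ (z ▽ y) ) △ ( y △ z ) = ( x △ y ) △ z. -/

import Mathlib

open Set

private lemma sInf_image_add_const {f : ℝ → ℝ} {S : Set ℝ} (hS : S.Nonempty)
    (hb : BddBelow (f '' S)) (c : ℝ) :
    sInf ((fun s => f s + c) '' S) = sInf (f '' S) + c := by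
  obtain ⟨B, hB⟩ := hb
  have hB' : ∀ s ∈ S, B ≤ f s := fun s hs => hB ⟨s, hs, rfl⟩
  have hb2 : BddBelow ((fun s => f s + c) '' S) := by
    refine ⟨B + c, ?_⟩
    rintro r ⟨s, hs, rfl⟩
    have := hB' s hs
    dsimp only
    linarith
  apply le_antisymm
  · have h1 : sInf ((fun s => f s + c) '' S) - c ≤ sInf (f '' S) := by
      apply le_csInf (hS.image f)
      rintro r ⟨s, hs, rfl⟩
      have := csInf_le hb2 (Set.mem_image_of_mem _ hs)
      linarith
    linarith
  · apply le_csInf (hS.image _)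
    rintro r ⟨s, hs, rfl⟩
    have := csInf_le ⟨B, hB⟩ (⟨s, hs, rfl⟩ : f s ∈ f '' S)
    dsimp only
    linarith

private lemma sSup_image_add_const {f : ℝ → ℝ} {S : Set ℝ} (hS : S.Nonempty)
    (hb : BddAbove (f '' S)) (c : ℝ) :
    sSup ((fun s => f s + c) '' S) = sSup (f '' S) + c := by
  obtain ⟨B, hB⟩ := hb
  have hB' : ∀ s ∈ S, f s ≤ B := fun s hs => hB ⟨s, hs, rfl⟩
  have hb2 : BddAbove ((fun s => f s + c) '' S) := by
    refine ⟨B + c, ?_⟩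
    rintro r ⟨s, hs, rfl⟩
    have := hB' s hs
    dsimp only
    linarith
  apply le_antisymm
  · apply csSup_le (hS.image _)
    rintro r ⟨s, hs, rfl⟩
    have := le_csSup ⟨B, hB⟩ (⟨s, hs, rfl⟩ : f s ∈ f '' S)
    dsimp only
    linarith
  · have h1 : sSup (f '' S) ≤ sSup ((fun s => f s + c) '' S) - c := by
      apply csSup_le (hS.image f)
      rintro r ⟨s, hs, rfl⟩
      have := le_csSup hb2 (Set.mem_image_of_mem _ hs)
      linarith
    linarith

private lemma sInf_image_neg_add_const {f : ℝ → ℝ} {S : Set ℝ} (hS : S.Nonempty)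
    (hb : BddAbove (f '' S)) (c : ℝ) :
    sInf ((fun s => -(f s) + c) '' S) = -sSup (f '' S) + c := by
  obtain ⟨B, hB⟩ := hb
  have hB' : ∀ s ∈ S, f s ≤ B := fun s hs => hB ⟨s, hs, rfl⟩
  have hb2 : BddBelow ((fun s => -(f s) + c) '' S) := by
    refine ⟨-B + c, ?_⟩
    rintro r ⟨s, hs, rfl⟩
    have := hB' s hs
    dsimp only
    linarith
  apply le_antisymm
  · have h1 : sSup (f '' S) ≤ -(sInf ((fun s => -(f s) + c) '' S)) + c := by
      apply csSup_le (hS.image f)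
      rintro r ⟨s, hs, rfl⟩
      have := csInf_le hb2 (Set.mem_image_of_mem _ hs)
      linarith
    linarith
  · apply le_csInf (hS.image _)
    rintro r ⟨s, hs, rfl⟩
    have := le_csSup ⟨B, hB⟩ (⟨s, hs, rfl⟩ : f s ∈ f '' S)
    dsimp only
    linarith

/-- Running maximum of `z - y`. -/
private noncomputable def MM (y z : ℝ → ℝ) (s : ℝ) : ℝ :=
  sSup ((fun u => z u - y u) '' Set.Icc 0 s)

/-- Running minimum of `x - y - MM y z`. -/
private noncomputable def KK (x y z : ℝ → ℝ) (s : ℝ) : ℝ :=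
  sInf ((fun u => x u - y u - MM y z u) '' Set.Icc 0 s)

/-- Running minimum of `x - y`. -/
private noncomputable def AH (x y : ℝ → ℝ) (s : ℝ) : ℝ :=
  sInf ((fun u => x u - y u) '' Set.Icc 0 s)

/-- The operation `(f △ g)(t) = inf_{0 ≤ s ≤ t} (f s − g s + g t)`. -/
noncomputable def triOp (f g : ℝ → ℝ) : ℝ → ℝ :=
  fun t => sInf ((fun s => f s - g s + g t) '' Set.Icc 0 t)

/-- The operation `(f ▽ g)(t) = sup_{0 ≤ s ≤ t} (f s − g s + g t)`. -/
noncomputable def nabOp (f g : ℝ → ℝ) : ℝ → ℝ :=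
  fun t => sSup ((fun s => f s - g s + g t) '' Set.Icc 0 t)

/-- Identity (3.8) of Biane–Bougerol–O'Connell, equivalent to the `n = 3` braid
relation for Pitman transforms: for continuous `x, y, z : [0,∞) → ℝ` vanishing at `0`,
`(x △ (z ▽ y)) △ (y △ z) = (x △ y) △ z`. -/
theorem tri_nab_braid
    (x y z : ℝ → ℝ)
    (hx : ContinuousOn x (Set.Ici 0)) (hy : ContinuousOn y (Set.Ici 0))
    (hz : ContinuousOn z (Set.Ici 0))
    (hx0 : x 0 = 0) (hy0 : y 0 = 0) (hz0 : z 0 = 0) :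
    ∀ t ∈ Set.Ici (0 : ℝ),
      triOp (triOp x (nabOp z y)) (triOp y z) t = triOp (triOp x y) z t := by
  intro t ht
  rw [Set.mem_Ici] at ht
  have hzy_cont : ContinuousOn (fun u => z u - y u) (Set.Ici 0) := hz.sub hy
  have ha_cont : ContinuousOn (fun u => x u - y u) (Set.Ici 0) := hx.sub hy
  have hIccIci : ∀ s : ℝ, Set.Icc (0:ℝ) s ⊆ Set.Ici 0 := fun s => Set.Icc_subset_Ici_self
  have hbddA : ∀ s : ℝ, BddAbove ((fun u => z u - y u) '' Set.Icc 0 s) := fun s =>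
    isCompact_Icc.bddAbove_image (hzy_cont.mono (hIccIci s))
  have hne : ∀ s : ℝ, 0 ≤ s → (Set.Icc (0:ℝ) s).Nonempty := fun s hs =>
    Set.nonempty_Icc.mpr hs
  have hIcct : (Set.Icc (0:ℝ) t).Nonempty := hne t ht
  -- basic facts about MM
  have hzyM : ∀ v s : ℝ, 0 ≤ v → v ≤ s → z v - y v ≤ MM y z s := fun v s h0 hvs =>
    le_csSup (hbddA s) ⟨v, ⟨h0, hvs⟩, rfl⟩
  have hM0 : ∀ s : ℝ, 0 ≤ s → 0 ≤ MM y z s := by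
    intro s hs
    have := hzyM 0 s le_rfl hs
    rw [hy0, hz0] at this
    linarith
  have hMmono : ∀ u s : ℝ, 0 ≤ u → u ≤ s → MM y z u ≤ MM y z s := fun u s h0 hus =>
    csSup_le_csSup (hbddA s) ((hne u h0).image _)
      (Set.image_mono (Set.Icc_subset_Icc_right hus))
  -- bound for x - y on [0, t]
  obtain ⟨A, hA⟩ : BddBelow ((fun u => x u - y u) '' Set.Icc 0 t) :=
    isCompact_Icc.bddBelow_image (ha_cont.mono (hIccIci t))
  have hA' : ∀ u ∈ Set.Icc (0:ℝ) t, A ≤ x u - y u := fun u hu => hA ⟨u, hu, rfl⟩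
  -- facts about KK
  have hKbdd : ∀ s : ℝ, 0 ≤ s → s ≤ t →
      BddBelow ((fun u => x u - y u - MM y z u) '' Set.Icc 0 s) := by
    intro s h0 hst
    refine ⟨A - MM y z t, ?_⟩
    rintro r ⟨u, hu, rfl⟩
    have h1 := hA' u ⟨hu.1, hu.2.trans hst⟩
    have h2 := hMmono u t hu.1 (hu.2.trans hst)
    dsimp only
    linarith
  have hK_le : ∀ u s : ℝ, 0 ≤ u → u ≤ s → s ≤ t → KK x y z s ≤ x u - y u - MM y z u :=
    fun u s h0 hus hst => csInf_le (hKbdd s (h0.trans hus) hst) ⟨u, ⟨h0, hus⟩, rfl⟩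
  have hK_ge : ∀ s : ℝ, 0 ≤ s → s ≤ t → A - MM y z t ≤ KK x y z s := by
    intro s h0 hst
    apply le_csInf ((hne s h0).image _)
    rintro r ⟨u, hu, rfl⟩
    have h1 := hA' u ⟨hu.1, hu.2.trans hst⟩
    have h2 := hMmono u t hu.1 (hu.2.trans hst)
    dsimp only
    linarith
  -- facts about AH
  have hAbddB : ∀ s : ℝ, 0 ≤ s → s ≤ t →
      BddBelow ((fun u => x u - y u) '' Set.Icc 0 s) := by
    intro s h0 hst
    exact ⟨A, by rintro r ⟨u, hu, rfl⟩; exact hA' u ⟨hu.1, hu.2.trans hst⟩⟩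
  have hAH_le : ∀ u s : ℝ, 0 ≤ u → u ≤ s → s ≤ t → AH x y s ≤ x u - y u :=
    fun u s h0 hus hst => csInf_le (hAbddB s (h0.trans hus) hst) ⟨u, ⟨h0, hus⟩, rfl⟩
  have hAH_ge : ∀ s : ℝ, 0 ≤ s → s ≤ t → A ≤ AH x y s := by
    intro s h0 hst
    apply le_csInf ((hne s h0).image _)
    rintro r ⟨u, hu, rfl⟩
    exact hA' u ⟨hu.1, hu.2.trans hst⟩
  -- formulas for the building blocks
  have hN : ∀ s : ℝ, 0 ≤ s → nabOp z y s = MM y z s + y s := by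
    intro s h0
    simp only [nabOp]
    exact sSup_image_add_const (hne s h0) (hbddA s) (y s)
  have hB1 : ∀ s : ℝ, 0 ≤ s → triOp y z s = -(MM y z s) + z s := by
    intro s h0
    simp only [triOp]
    rw [show (fun v => y v - z v + z s) = (fun v => -(z v - y v) + z s) from
      funext fun v => by ring]
    exact sInf_image_neg_add_const (hne s h0) (hbddA s) (z s)
  have hC : ∀ s : ℝ, 0 ≤ s → s ≤ t →
      triOp x (nabOp z y) s = KK x y z s + (MM y z s + y s) := by
    intro s h0 hst
    simp only [triOp]
    have himg : (fun u => x u - nabOp z y u + nabOp z y s) '' Set.Icc 0 s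
        = (fun u => (x u - y u - MM y z u) + (MM y z s + y s)) '' Set.Icc 0 s := by
      apply Set.image_congr
      intro u hu
      rw [hN u hu.1, hN s h0]
      ring
    rw [himg]
    exact sInf_image_add_const (hne s h0) (hKbdd s h0 hst) (MM y z s + y s)
  have hXY : ∀ s : ℝ, 0 ≤ s → s ≤ t → triOp x y s = AH x y s + y s := by
    intro s h0 hst
    simp only [triOp]
    exact sInf_image_add_const (hne s h0) (hAbddB s h0 hst) (y s)
  -- boundedness of the two main image sets
  have hLbdd : BddBelow
      ((fun s => KK x y z s + (y s - z s) + 2 * MM y z s) '' Set.Icc 0 t) := by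
    refine ⟨A - 2 * MM y z t, ?_⟩
    rintro w ⟨s, hs, rfl⟩
    have h1 := hK_ge s hs.1 hs.2
    have h2 := hzyM s t hs.1 hs.2
    have h3 := hM0 s hs.1
    dsimp only
    linarith
  have hRbdd : BddBelow ((fun s => AH x y s + (y s - z s)) '' Set.Icc 0 t) := by
    refine ⟨A - MM y z t, ?_⟩
    rintro w ⟨s, hs, rfl⟩
    have h1 := hAH_ge s hs.1 hs.2
    have h2 := hzyM s t hs.1 hs.2
    dsimp only
    linarith
  -- the two sides of the identity
  have hLHS : triOp (triOp x (nabOp z y)) (triOp y z) t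
      = sInf ((fun s => KK x y z s + (y s - z s) + 2 * MM y z s) '' Set.Icc 0 t)
        + (-(MM y z t) + z t) := by
    have h0 : triOp (triOp x (nabOp z y)) (triOp y z) t
        = sInf ((fun s => triOp x (nabOp z y) s - triOp y z s + triOp y z t)
          '' Set.Icc 0 t) := rfl
    rw [h0]
    have himg : (fun s => triOp x (nabOp z y) s - triOp y z s + triOp y z t)
          '' Set.Icc 0 t
        = (fun s => (KK x y z s + (y s - z s) + 2 * MM y z s) + (-(MM y z t) + z t))
          '' Set.Icc 0 t := by
      apply Set.image_congr
      intro s hs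
      rw [hC s hs.1 hs.2, hB1 s hs.1, hB1 t ht]
      ring
    rw [himg]
    exact sInf_image_add_const hIcct hLbdd (-(MM y z t) + z t)
  have hRHS : triOp (triOp x y) z t
      = sInf ((fun s => AH x y s + (y s - z s)) '' Set.Icc 0 t) + z t := by
    have h0 : triOp (triOp x y) z t
        = sInf ((fun s => triOp x y s - z s + z t) '' Set.Icc 0 t) := rfl
    rw [h0]
    have himg : (fun s => triOp x y s - z s + z t) '' Set.Icc 0 t
        = (fun s => (AH x y s + (y s - z s)) + z t) '' Set.Icc 0 t := by
      apply Set.image_congr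
      intro s hs
      rw [hXY s hs.1 hs.2]
      ring
    rw [himg]
    exact sInf_image_add_const hIcct hRbdd (z t)
  -- lower bound on the RHS infimum
  have hR_le : ∀ u s : ℝ, 0 ≤ u → u ≤ s → s ≤ t →
      sInf ((fun s => AH x y s + (y s - z s)) '' Set.Icc 0 t)
        ≤ x u - y u + (y s - z s) := by
    intro u s h0 hus hst
    have h1 : sInf ((fun s => AH x y s + (y s - z s)) '' Set.Icc 0 t)
        ≤ AH x y s + (y s - z s) := csInf_le hRbdd ⟨s, ⟨h0.trans hus, hst⟩, rfl⟩
    have h2 := hAH_le u s h0 hus hst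
    linarith
  -- key inequality 1 : each term of the LHS inf dominates (RHS inf) + M t
  have key1 : ∀ u s : ℝ, 0 ≤ u → u ≤ s → s ≤ t →
      sInf ((fun s => AH x y s + (y s - z s)) '' Set.Icc 0 t) + MM y z t
        ≤ x u - y u + (y s - z s) - MM y z u + 2 * MM y z s := by
    intro u s h0 hus hst
    have hMus := hMmono u s h0 hus
    have hMst := hMmono s t (h0.trans hus) hst
    have hbs := hzyM s s (h0.trans hus) le_rfl
    rcases eq_or_lt_of_le (hMmono u t h0 (hus.trans hst)) with heq | hlt
    · have h1 := hR_le u s h0 hus hst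
      linarith
    · obtain ⟨w, hw, hwmax⟩ :=
        isCompact_Icc.exists_isMaxOn hIcct (hzy_cont.mono (hIccIci t))
      have hMtw : MM y z t = z w - y w := by
        apply le_antisymm
        · apply csSup_le (hIcct.image _)
          rintro r ⟨v, hv, rfl⟩
          exact hwmax hv
        · exact hzyM w t hw.1 hw.2
      have huw : u ≤ w := by
        by_contra hcon
        have h2 : z w - y w ≤ MM y z u := hzyM w u hw.1 (le_of_not_ge hcon)
        rw [← hMtw] at h2
        linarith
      have h1 := hR_le u w h0 huw hw.2
      linarith
  -- key inequality 2 : LHS inf is below each term of (RHS inf) + M t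
  have key2 : ∀ u s' : ℝ, 0 ≤ u → u ≤ s' → s' ≤ t →
      sInf ((fun s => KK x y z s + (y s - z s) + 2 * MM y z s) '' Set.Icc 0 t)
        ≤ x u - y u + (y s' - z s') + MM y z t := by
    intro u s' h0 hus hst
    rcases eq_or_lt_of_le (hMmono u t h0 (hus.trans hst)) with heq | hlt
    · have h1 : sInf ((fun s => KK x y z s + (y s - z s) + 2 * MM y z s)
          '' Set.Icc 0 t) ≤ KK x y z s' + (y s' - z s') + 2 * MM y z s' :=
        csInf_le hLbdd ⟨s', ⟨h0.trans hus, hst⟩, rfl⟩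
      have h2 := hK_le u s' h0 hus hst
      have h3 := hMmono s' t (h0.trans hus) hst
      have h4 := hM0 u h0
      linarith
    · -- find the first point r ≥ u where z - y reaches level M u
      have hwit : ∃ v, 0 ≤ v ∧ v ≤ t ∧ MM y z u < z v - y v := by
        have hc' : MM y z u < sSup ((fun v => z v - y v) '' Set.Icc 0 t) := hlt
        obtain ⟨d, hd, hcd⟩ := exists_lt_of_lt_csSup (hIcct.image _) hc'
        obtain ⟨v, hv, rfl⟩ := hd
        exact ⟨v, hv.1, hv.2, hcd⟩
      obtain ⟨v, hv0, hvt, hv⟩ := hwit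
      have huv : u ≤ v := by
        by_contra hcon
        have := hzyM v u hv0 (le_of_not_ge hcon)
        linarith
      have hsubIci : Set.Icc u t ⊆ Set.Ici (0:ℝ) := fun q hq =>
        Set.mem_Ici.mpr (h0.trans hq.1)
      have hSclosed : IsClosed (Set.Icc u t ∩ (fun q => z q - y q) ⁻¹' Set.Ici (MM y z u)) :=
        ContinuousOn.preimage_isClosed_of_isClosed (hzy_cont.mono hsubIci)
          isClosed_Icc isClosed_Ici
      have hSne : (Set.Icc u t ∩ (fun q => z q - y q) ⁻¹' Set.Ici (MM y z u)).Nonempty :=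
        ⟨v, ⟨huv, hvt⟩, le_of_lt hv⟩
      have hSbdd : BddBelow (Set.Icc u t ∩ (fun q => z q - y q) ⁻¹' Set.Ici (MM y z u)) :=
        ⟨u, fun q hq => hq.1.1⟩
      have hrS : sInf (Set.Icc u t ∩ (fun q => z q - y q) ⁻¹' Set.Ici (MM y z u))
          ∈ Set.Icc u t ∩ (fun q => z q - y q) ⁻¹' Set.Ici (MM y z u) :=
        hSclosed.csInf_mem hSne hSbdd
      set r := sInf (Set.Icc u t ∩ (fun q => z q - y q) ⁻¹' Set.Ici (MM y z u)) with hrdef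
      obtain ⟨⟨hur, hrt⟩, hMur⟩ := hrS
      rw [Set.mem_preimage, Set.mem_Ici] at hMur
      have hr0 : 0 ≤ r := h0.trans hur
      have hzyr_le : z r - y r ≤ MM y z u := by
        by_contra hcon
        push_neg at hcon
        have hur' : u < r := by
          rcases eq_or_lt_of_le hur with h | h
          · exfalso
            have := hzyM u u h0 le_rfl
            rw [← h] at hcon
            linarith
          · exact h
        have hr_pos : 0 < r := lt_of_le_of_lt h0 hur'
        have hca : ContinuousAt (fun q => z q - y q) r :=
          hzy_cont.continuousAt (Ici_mem_nhds hr_pos)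
        have hev : ∀ᶠ q in nhds r, MM y z u < z q - y q :=
          hca.eventually (eventually_gt_nhds hcon)
        rw [Metric.eventually_nhds_iff] at hev
        obtain ⟨ε, hε, hball⟩ := hev
        have hq_lt : max u (r - ε/2) < r := max_lt hur' (by linarith)
        have hq_ge : r - ε/2 ≤ max u (r - ε/2) := le_max_right _ _
        have hdist : dist (max u (r - ε/2)) r < ε := by
          rw [Real.dist_eq, abs_of_nonpos (by linarith)]
          linarith
        have hqS : max u (r - ε/2) ∈
            Set.Icc u t ∩ (fun q => z q - y q) ⁻¹' Set.Ici (MM y z u) :=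
          ⟨⟨le_max_left _ _, (hq_lt.le.trans hrt)⟩, le_of_lt (hball hdist)⟩
        have hle := csInf_le hSbdd hqS
        rw [← hrdef] at hle
        linarith
      have hzyr : z r - y r = MM y z u := le_antisymm hzyr_le hMur
      have hMr_le : MM y z r ≤ MM y z u := by
        apply csSup_le ((hne r hr0).image _)
        rintro w ⟨p, ⟨hp0, hpr⟩, rfl⟩
        dsimp only
        rcases le_or_gt p u with hpu | hup
        · exact hzyM p u hp0 hpu
        · rcases eq_or_lt_of_le hpr with heq2 | hpr'
          · rw [heq2]
            exact le_of_eq hzyr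
          · by_contra hc
            push_neg at hc
            have hpS : p ∈ Set.Icc u t ∩ (fun q => z q - y q) ⁻¹' Set.Ici (MM y z u) :=
              ⟨⟨le_of_lt hup, hpr.trans hrt⟩, le_of_lt hc⟩
            have hle := csInf_le hSbdd hpS
            rw [← hrdef] at hle
            linarith
      have hMr : MM y z r = MM y z u := le_antisymm hMr_le (hMmono u r h0 hur)
      have h1 : sInf ((fun s => KK x y z s + (y s - z s) + 2 * MM y z s)
          '' Set.Icc 0 t) ≤ KK x y z r + (y r - z r) + 2 * MM y z r :=
        csInf_le hLbdd ⟨r, ⟨hr0, hrt⟩, rfl⟩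
      have h2 : KK x y z r ≤ x u - y u - MM y z u := hK_le u r h0 hur hrt
      have h4 := hzyM s' t (h0.trans hus) hst
      rw [hMr] at h1
      linarith
  -- conclusion
  rw [hLHS, hRHS]
  have hge : sInf ((fun s => AH x y s + (y s - z s)) '' Set.Icc 0 t) + MM y z t
      ≤ sInf ((fun s => KK x y z s + (y s - z s) + 2 * MM y z s) '' Set.Icc 0 t) := by
    apply le_csInf (hIcct.image _)
    rintro w ⟨s, hs, rfl⟩
    have hKge : sInf ((fun s => AH x y s + (y s - z s)) '' Set.Icc 0 t) + MM y z t
        - (y s - z s) - 2 * MM y z s ≤ KK x y z s := by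
      show _ ≤ sInf ((fun u => x u - y u - MM y z u) '' Set.Icc 0 s)
      apply le_csInf ((hne s hs.1).image _)
      rintro w ⟨u, hu, rfl⟩
      have := key1 u s hu.1 hu.2 hs.2
      dsimp only
      linarith
    dsimp only
    linarith
  have hle : sInf ((fun s => KK x y z s + (y s - z s) + 2 * MM y z s) '' Set.Icc 0 t)
      ≤ sInf ((fun s => AH x y s + (y s - z s)) '' Set.Icc 0 t) + MM y z t := by
    have h : sInf ((fun s => KK x y z s + (y s - z s) + 2 * MM y z s) '' Set.Icc 0 t)
        - MM y z t ≤ sInf ((fun s => AH x y s + (y s - z s)) '' Set.Icc 0 t) := by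
      apply le_csInf (hIcct.image _)
      rintro w ⟨s', hs', rfl⟩
      have hAHge : sInf ((fun s => KK x y z s + (y s - z s) + 2 * MM y z s)
          '' Set.Icc 0 t) - MM y z t - (y s' - z s') ≤ AH x y s' := by
        show _ ≤ sInf ((fun u => x u - y u) '' Set.Icc 0 s')
        apply le_csInf ((hne s' hs'.1).image _)
        rintro w ⟨u, hu, rfl⟩
        have := key2 u s' hu.1 hu.2 hs'.2
        dsimp only
        linarith
      dsimp only
      linarith
    linarith
  have hmain := le_antisymm hle hge
  linarith
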